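/- arXiv:1707.09859 — 4 statements merged into one kernel-verified Lean document; each statement's English description precedes it below -/
import Mathlib

section
/- Let A be a symmetric positive semidefinite n×n real matrix and f : ℝⁿ → ℝⁿ a Lipschitz gradient field, f = ∇F with F : ℝⁿ → ℝ, and let L be a Lipschitz constant of f. Define E(u) = ½⟨Au, u⟩ + F(u). For the semi-implicit scheme (u^{k+1} − u^k)/Δt + A u^{k+1} + f(u^k) = 0, if 0 < Δt < 2/L then E(u^{k+1}) ≤ E(u^k) for every k. -/
open scoped RealInnerProductSpace

/-- Descent lemma: if `F` has `L`-Lipschitz gradient `f`, then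
`F (u + v) ≤ F u + ⟪f u, v⟫ + L/2 ‖v‖²`. -/
lemma descent_lemma_aux {E : Type*} [NormedAddCommGroup E] [InnerProductSpace ℝ E]
    [CompleteSpace E]
    (F : E → ℝ) (f : E → E) (hgrad : ∀ x, HasGradientAt F (f x) x)
    (L : NNReal) (hf : LipschitzWith L f) (u v : E) :
    F (u + v) ≤ F u + ⟪f u, v⟫ + (L : ℝ) / 2 * ‖v‖ ^ 2 := by
  have hline : ∀ t : ℝ, HasDerivAt (fun s : ℝ => u + s • v) v t := by
    intro t
    simpa using ((hasDerivAt_id t).smul_const v).const_add u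
  have hderiv : ∀ t : ℝ, HasDerivAt (fun s : ℝ => F (u + s • v))
      ⟪f (u + t • v), v⟫ t := by
    intro t
    have := (hgrad (u + t • v)).hasFDerivAt.comp_hasDerivAt t (hline t)
    simp at this; exact this
  have hcont : Continuous fun t : ℝ => ⟪f (u + t • v), v⟫ := by
    exact (hf.continuous.comp (by continuity)).inner continuous_const
  have hint : IntervalIntegrable (fun t : ℝ => ⟪f (u + t • v), v⟫)
      MeasureTheory.volume 0 1 := hcont.intervalIntegrable 0 1
  have key : F (u + v) - F u = ∫ t in (0:ℝ)..1, ⟪f (u + t • v), v⟫ := by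
    have := intervalIntegral.integral_eq_sub_of_hasDerivAt
      (fun t _ => hderiv t) hint
    simpa using this.symm
  have hbound : ∫ t in (0:ℝ)..1, ⟪f (u + t • v), v⟫
      ≤ ∫ t in (0:ℝ)..1, (⟪f u, v⟫ + (L : ℝ) * t * ‖v‖ ^ 2) := by
    apply intervalIntegral.integral_mono_on (by norm_num) hint
    · exact (intervalIntegrable_const).add
        (((continuous_id.intervalIntegrable 0 1).const_mul _).mul_const _)
    · intro t ht
      have h1 : ⟪f (u + t • v) - f u, v⟫ ≤ ‖f (u + t • v) - f u‖ * ‖v‖ :=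
        real_inner_le_norm _ _
      have h2 : ‖f (u + t • v) - f u‖ ≤ (L : ℝ) * (t * ‖v‖) := by
        have := hf.dist_le_mul (u + t • v) u
        rw [dist_eq_norm] at this
        simpa [norm_smul, abs_of_nonneg ht.1] using this
      have h3 : ⟪f (u + t • v), v⟫ = ⟪f u, v⟫ + ⟪f (u + t • v) - f u, v⟫ := by
        rw [inner_sub_left]; ring
      have h4 : ‖f (u + t • v) - f u‖ * ‖v‖ ≤ (L : ℝ) * (t * ‖v‖) * ‖v‖ :=
        mul_le_mul_of_nonneg_right h2 (norm_nonneg v)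
      rw [h3]; nlinarith [h1]
  have hval : ∫ t in (0:ℝ)..1, (⟪f u, v⟫ + (L : ℝ) * t * ‖v‖ ^ 2)
      = ⟪f u, v⟫ + (L : ℝ) / 2 * ‖v‖ ^ 2 := by
    have : (fun t : ℝ => ⟪f u, v⟫ + (L : ℝ) * t * ‖v‖ ^ 2)
        = fun t : ℝ => ⟪f u, v⟫ + ((L : ℝ) * ‖v‖ ^ 2) * t := by
      funext t; ring
    rw [this, intervalIntegral.integral_add intervalIntegrable_const
      ((by fun_prop : Continuous fun t:ℝ => ((L:ℝ)*‖v‖^2)*t).intervalIntegrable 0 1),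
      intervalIntegral.integral_const_mul]
    simp [integral_id]
    ring
  linarith [key, hbound, hval.le, hval.ge]

/-- the semi-implicit scheme `(u' − u)/Δt + A u' + f(u) = 0` for the
gradient flow with energy `E(u) = ½⟨Au,u⟩ + F(u)` is energy diminishing under the
time-step restriction `0 < Δt < 2/L`, `L` a Lipschitz constant of `f = ∇F`. -/
theorem semiImplicit_energy_diminishing
    {n : ℕ} (A : Matrix (Fin n) (Fin n) ℝ) (hA : A.PosSemidef)
    (F : EuclideanSpace ℝ (Fin n) → ℝ) (f : EuclideanSpace ℝ (Fin n) → EuclideanSpace ℝ (Fin n))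
    (hgrad : ∀ x, HasGradientAt F (f x) x)
    (L : NNReal) (hf : LipschitzWith L f)
    (E : EuclideanSpace ℝ (Fin n) → ℝ)
    (hE : ∀ u, E u = (1 / 2) * ⟪Matrix.toEuclideanLin A u, u⟫ + F u)
    (Δt : ℝ) (hΔt : 0 < Δt) (hΔtL : Δt < 2 / (L : ℝ))
    (u u' : EuclideanSpace ℝ (Fin n))
    (hscheme : Δt⁻¹ • (u' - u) + Matrix.toEuclideanLin A u' + f u = 0) :
    E u' ≤ E u := by
  set T := Matrix.toEuclideanLin A with hT
  set v : EuclideanSpace ℝ (Fin n) := u' - u with hv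
  have hsym : ∀ x y : EuclideanSpace ℝ (Fin n), ⟪T x, y⟫ = ⟪x, T y⟫ :=
    fun x y => Matrix.isHermitian_iff_isSymmetric.1 hA.1 x y
  have hpos : 0 ≤ ⟪T v, v⟫ := by
    have h := hA.re_dotProduct_nonneg v
    simpa [hT, Matrix.toEuclideanLin_apply, PiLp.inner_apply, dotProduct,
      Matrix.mulVec, mul_comm] using h
  -- scheme identity
  have hsch : T u' + f u = -(Δt⁻¹ • v) := by
    have h := hscheme
    rw [add_assoc] at h
    exact (neg_eq_of_add_eq_zero_right h).symm
  have hip : ⟪T u', v⟫ + ⟪f u, v⟫ = -(Δt⁻¹ * ‖v‖ ^ 2) := by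
    have := congrArg (fun w => ⟪w, v⟫) hsch
    simp only [inner_add_left, inner_neg_left, inner_smul_left, RCLike.star_def,
      RingHom.id_apply, conj_trivial] at this
    rw [real_inner_self_eq_norm_sq] at this
    linarith [this]
  -- quadratic expansion
  have hquad : ⟪T u', u'⟫ - ⟪T u, u⟫ = 2 * ⟪T u', v⟫ - ⟪T v, v⟫ := by
    have hu : u = u' - v := by simp [hv]
    rw [hu]
    simp only [map_sub, inner_sub_left, inner_sub_right]
    have h1 : ⟪T v, u'⟫ = ⟪T u', v⟫ := by
      rw [hsym v u', real_inner_comm]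
    rw [h1]
    ring
  -- descent lemma
  have hdes : F u' ≤ F u + ⟪f u, v⟫ + (L : ℝ) / 2 * ‖v‖ ^ 2 := by
    have := descent_lemma_aux F f hgrad L hf u v
    simpa [hv] using this
  -- step-size condition
  have hL2 : (L : ℝ) / 2 ≤ Δt⁻¹ := by
    by_cases hL0 : (L : ℝ) = 0
    · simp [hL0]; positivity
    · have hLpos : (0:ℝ) < L := lt_of_le_of_ne L.coe_nonneg (Ne.symm hL0)
      have h2 : Δt * (L : ℝ) < 2 := by
        have := (lt_div_iff₀ hLpos).mp hΔtL
        linarith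
      have hinv : Δt * Δt⁻¹ = 1 := mul_inv_cancel₀ hΔt.ne'
      nlinarith [mul_pos (sub_pos.mpr h2) (inv_pos.mpr hΔt), hinv]
  have hvnn : (0:ℝ) ≤ ‖v‖ ^ 2 := by positivity
  rw [hE u', hE u]
  linarith [hquad, hip, hdes, hpos, mul_le_mul_of_nonneg_right hL2 hvnn]
end

section
/- Let A be a symmetric positive semidefinite n×n real matrix, F : ℝⁿ → ℝ a C¹ function with f = ∇F Lipschitz with constant L, and E(u) = ½⟨Au, u⟩ + F(u). For the stabilized semi-implicit scheme (u^{k+1} − u^k)/Δt + S(u^{k+1} − u^k) + A u^{k+1} + f(u^k) = 0 with stabilization parameter S ≥ L/2, the scheme is unconditionally energy diminishing: E(u^{k+1}) ≤ E(u^k) for every Δt > 0. -/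
open scoped RealInnerProductSpace

lemma my_descent {n : ℕ} (F : EuclideanSpace ℝ (Fin n) → ℝ)
    (f : EuclideanSpace ℝ (Fin n) → EuclideanSpace ℝ (Fin n))
    (hgrad : ∀ x, HasGradientAt F (f x) x)
    (L : NNReal) (hf : LipschitzWith L f) (u v : EuclideanSpace ℝ (Fin n)) :
    F (u + v) ≤ F u + ⟪f u, v⟫ + (L : ℝ) / 2 * ‖v‖ ^ 2 := by
  have hd : ∀ t : ℝ, HasDerivAt (fun t : ℝ => F (u + t • v)) ⟪f (u + t • v), v⟫ t := by
    intro t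
    have h1 : HasDerivAt (fun t : ℝ => u + t • v) v t := by
      simpa using ((hasDerivAt_id t).smul_const v).const_add u
    have h2 := (hgrad (u + t • v)).hasFDerivAt.comp_hasDerivAt t h1
    simpa [InnerProductSpace.toDual_apply_apply, Function.comp_def] using h2
  have hcont : Continuous fun t : ℝ => ⟪f (u + t • v), v⟫ :=
    (hf.continuous.comp (by continuity)).inner continuous_const
  have hFTC : F (u + v) - F u = ∫ t in (0:ℝ)..1, ⟪f (u + t • v), v⟫ := by
    have := intervalIntegral.integral_eq_sub_of_hasDerivAt
      (fun t _ => hd t) (hcont.intervalIntegrable 0 1)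
    simpa using this.symm
  have hbound : (∫ t in (0:ℝ)..1, ⟪f (u + t • v), v⟫)
      ≤ ∫ t in (0:ℝ)..1, (⟪f u, v⟫ + ((L : ℝ) * ‖v‖ ^ 2) * t) := by
    have hib : IntervalIntegrable (fun t : ℝ => ⟪f u, v⟫ + ((L : ℝ) * ‖v‖ ^ 2) * t)
        MeasureTheory.volume 0 1 := by
      apply Continuous.intervalIntegrable; continuity
    apply intervalIntegral.integral_mono_on (by norm_num)
      (hcont.intervalIntegrable 0 1) hib
    intro t ht
    rw [Set.mem_Icc] at ht
    have key : ⟪f (u + t • v) - f u, v⟫ ≤ ((L : ℝ) * ‖v‖ ^ 2) * t := by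
      calc ⟪f (u + t • v) - f u, v⟫ ≤ ‖f (u + t • v) - f u‖ * ‖v‖ := real_inner_le_norm _ _
        _ ≤ ((L : ℝ) * ‖t • v‖) * ‖v‖ := by
            gcongr
            simpa [dist_eq_norm] using hf.dist_le_mul (u + t • v) u
        _ = ((L : ℝ) * ‖v‖ ^ 2) * t := by
            rw [norm_smul, Real.norm_of_nonneg ht.1]; ring
    rw [inner_sub_left] at key
    linarith
  have hint : (∫ t in (0:ℝ)..1, (⟪f u, v⟫ + ((L : ℝ) * ‖v‖ ^ 2) * t))
      = ⟪f u, v⟫ + (L : ℝ) / 2 * ‖v‖ ^ 2 := by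
    have hib2 : IntervalIntegrable (fun t : ℝ => ((L : ℝ) * ‖v‖ ^ 2) * t)
        MeasureTheory.volume 0 1 := by
      apply Continuous.intervalIntegrable; continuity
    rw [intervalIntegral.integral_add intervalIntegrable_const hib2,
      intervalIntegral.integral_const_mul, integral_id]
    simp
    ring
  rw [hint] at hbound
  linarith [hFTC ▸ hbound]

/-- the stabilized semi-implicit scheme
`(u' − u)/Δt + S(u' − u) + A u' + f(u) = 0` with `S ≥ L/2` is unconditionally
energy diminishing: `E(u') ≤ E(u)` for every `Δt > 0`. -/
theorem stabilized_semiImplicit_energy_diminishing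
    {n : ℕ} (A : Matrix (Fin n) (Fin n) ℝ) (hA : A.PosSemidef)
    (F : EuclideanSpace ℝ (Fin n) → ℝ) (f : EuclideanSpace ℝ (Fin n) → EuclideanSpace ℝ (Fin n))
    (hgrad : ∀ x, HasGradientAt F (f x) x)
    (L : NNReal) (hf : LipschitzWith L f)
    (S : ℝ) (hS : (L : ℝ) / 2 ≤ S)
    (E : EuclideanSpace ℝ (Fin n) → ℝ)
    (hE : ∀ u, E u = (1 / 2) * ⟪Matrix.toEuclideanLin A u, u⟫ + F u)
    (Δt : ℝ) (hΔt : 0 < Δt)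
    (u u' : EuclideanSpace ℝ (Fin n))
    (hscheme : Δt⁻¹ • (u' - u) + S • (u' - u) + Matrix.toEuclideanLin A u' + f u = 0) :
    E u' ≤ E u := by
  set B := Matrix.toEuclideanLin A with hB
  set v := u' - u with hv
  have hsym : ∀ x y : EuclideanSpace ℝ (Fin n), ⟪B x, y⟫ = ⟪x, B y⟫ :=
    Matrix.isHermitian_iff_isSymmetric.1 hA.1
  have hBvv : 0 ≤ ⟪B v, v⟫ := by
    rw [real_inner_comm]
    have h := hA.re_dotProduct_nonneg (WithLp.equiv 2 _ v)
    simpa [EuclideanSpace.inner_eq_star_dotProduct, Matrix.ofLp_toEuclideanLin_apply,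
      hB, dotProduct_comm] using h
  have hsch : B u' + f u = -((Δt⁻¹ + S) • v) := by
    have h2 : (Δt⁻¹ • v + S • v) + (B u' + f u) = 0 := by
      rw [← add_assoc]; exact hscheme
    rw [add_smul]
    exact eq_neg_of_add_eq_zero_right h2
  have hIp : ⟪B u', v⟫ + ⟪f u, v⟫ = -((Δt⁻¹ + S) * ‖v‖ ^ 2) := by
    rw [← inner_add_left, hsch, inner_neg_left, real_inner_smul_left,
      real_inner_self_eq_norm_sq]
  have hquad : ⟪B u, u⟫ = ⟪B u', u'⟫ - 2 * ⟪B u', v⟫ + ⟪B v, v⟫ := by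
    have hu : u = u' - v := by rw [hv]; abel
    have h1 : ⟪B v, u'⟫ = ⟪B u', v⟫ := by rw [hsym, real_inner_comm]
    rw [hu]
    simp only [map_sub, inner_sub_left, inner_sub_right]
    linarith
  have hdes := my_descent F f hgrad L hf u v
  rw [show u + v = u' by rw [hv]; abel] at hdes
  rw [hE u', hE u]
  have h1 : 0 ≤ (S - (L : ℝ) / 2) * ‖v‖ ^ 2 :=
    mul_nonneg (by linarith) (sq_nonneg _)
  have h2 : 0 ≤ Δt⁻¹ * ‖v‖ ^ 2 :=
    mul_nonneg (le_of_lt (inv_pos.2 hΔt)) (sq_nonneg _)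
  linarith [hIp, hquad, hdes, hBvv, h1, h2]
end

section
/- Let A be a symmetric positive semidefinite n×n real matrix, F : ℝⁿ → ℝ differentiable, and define E(u) = ½⟨Au,u⟩ + F(u). Suppose the fully implicit scheme (u^{k+1} − u^k)/Δt + A u^{k+1} + g(u^k, u^{k+1}) = 0 holds, where g : ℝⁿ × ℝⁿ → ℝⁿ satisfies the secant condition ⟨g(u,v), v − u⟩ = F(v) − F(u) for all u, v. Then E(u^{k+1}) ≤ E(u^k) for every Δt > 0, i.e. the scheme is unconditionally energy stable. -/
open scoped RealInnerProductSpace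

/-- the fully implicit scheme `(u' − u)/Δt + A u' + g(u, u') = 0`,
where `g` satisfies the secant condition `⟨g(u,v), v − u⟩ = F(v) − F(u)`,
is unconditionally energy stable: `E(u') ≤ E(u)` for every `Δt > 0`. -/
theorem implicit_secant_scheme_energy_stable
    {n : ℕ} (A : Matrix (Fin n) (Fin n) ℝ) (hA : A.PosSemidef)
    (F : EuclideanSpace ℝ (Fin n) → ℝ) (hF : Differentiable ℝ F)
    (g : EuclideanSpace ℝ (Fin n) → EuclideanSpace ℝ (Fin n) → EuclideanSpace ℝ (Fin n))
    (hsecant : ∀ u v, ⟪g u v, v - u⟫ = F v - F u)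
    (E : EuclideanSpace ℝ (Fin n) → ℝ)
    (hE : ∀ u, E u = (1 / 2) * ⟪Matrix.toEuclideanLin A u, u⟫ + F u)
    (Δt : ℝ) (hΔt : 0 < Δt)
    (u u' : EuclideanSpace ℝ (Fin n))
    (hscheme : Δt⁻¹ • (u' - u) + Matrix.toEuclideanLin A u' + g u u' = 0) :
    E u' ≤ E u := by
  set T := Matrix.toEuclideanLin A with hT
  have hsym : T.IsSymmetric := (Matrix.isHermitian_iff_isSymmetric).mp hA.1
  have hpos : ∀ w, (0:ℝ) ≤ ⟪T w, w⟫ := by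
    intro w
    have := hA.dotProduct_mulVec_nonneg (WithLp.ofLp w)
    simpa [EuclideanSpace.inner_eq_star_dotProduct, Matrix.toEuclideanLin_apply,
      dotProduct, mul_comm, hT] using this
  -- inner product of scheme with (u' - u)
  have hkey : Δt⁻¹ * ⟪u' - u, u' - u⟫ + ⟪T u', u' - u⟫ + (F u' - F u) = 0 := by
    have h0 : ⟪Δt⁻¹ • (u' - u) + T u' + g u u', u' - u⟫ = 0 := by
      rw [hscheme]; simp
    rw [inner_add_left, inner_add_left, real_inner_smul_left, hsecant u u'] at h0
    linarith
  have hposd := hpos (u' - u)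
  have hAd : ⟪T (u' - u), u' - u⟫ = ⟪T u', u'⟫ - 2 * ⟪T u', u⟫ + ⟪T u, u⟫ := by
    have h1 : ⟪T u, u'⟫ = ⟪T u', u⟫ := by
      rw [hsym u u', real_inner_comm]
    simp only [map_sub, inner_sub_left, inner_sub_right, h1]
    ring
  have hnorm : (0:ℝ) ≤ ⟪u' - u, u' - u⟫ := real_inner_self_nonneg
  have hTd : ⟪T u', u' - u⟫ = ⟪T u', u'⟫ - ⟪T u', u⟫ := by
    rw [inner_sub_right]
  rw [hE u', hE u]
  have hΔ : 0 < Δt⁻¹ := inv_pos.mpr hΔt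
  nlinarith [mul_nonneg (le_of_lt hΔ) hnorm]
end

section
/- Let A be a symmetric positive semidefinite matrix and F a C¹ function on ℝⁿ with F convex-splittable as F = F_c − F_e where F_c, F_e are convex and C¹. Then for the convex-splitting scheme (u^{k+1} − u^k)/Δt + A u^{k+1} + ∇F_c(u^{k+1}) − ∇F_e(u^k) = 0, the energy E(u) = ½⟨Au,u⟩ + F(u) satisfies E(u^{k+1}) ≤ E(u^k) for every Δt > 0. -/
open scoped RealInnerProductSpace

lemma grad_convex_ineq {n : ℕ} {F : EuclideanSpace ℝ (Fin n) → ℝ}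
    (hF : ConvexOn ℝ Set.univ F) {g x : EuclideanSpace ℝ (Fin n)}
    (hg : HasGradientAt F g x) (y : EuclideanSpace ℝ (Fin n)) :
    F x + ⟪g, y - x⟫ ≤ F y := by
  set L : ℝ →ᵃ[ℝ] EuclideanSpace ℝ (Fin n) := AffineMap.lineMap x y with hL
  have hφ : ConvexOn ℝ Set.univ (F ∘ L) := by
    have := hF.comp_affineMap L
    simpa using this
  have h0 : L 0 = x := by simp [hL]
  have h1 : L 1 = y := by simp [hL]
  have hcder : HasDerivAt (fun t : ℝ => L t) (y - x) 0 := by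
    simp only [hL, AffineMap.lineMap_apply, vsub_eq_sub, vadd_eq_add]
    simpa using ((hasDerivAt_id (0:ℝ)).smul_const (y - x)).add_const x
  have hder : HasDerivAt (F ∘ L) ⟪g, y - x⟫ 0 := by
    have hF' : HasFDerivAt F ((InnerProductSpace.toDual ℝ _) g) (L 0) := h0 ▸ hg.hasFDerivAt
    simpa only [InnerProductSpace.toDual_apply_apply] using hF'.comp_hasDerivAt 0 hcder
  have hslope := hφ.le_slope_of_hasDerivAt (Set.mem_univ (0:ℝ)) (Set.mem_univ (1:ℝ))
    one_pos hder
  rw [slope_def_field] at hslope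
  simp only [Function.comp_apply, h0, h1] at hslope
  have : ⟪g, y - x⟫ ≤ F y - F x := by simpa using hslope
  linarith

/-- Eyre's convex-splitting scheme
`(u' − u)/Δt + A u' + ∇F_c(u') − ∇F_e(u) = 0`, `F = F_c − F_e` with `F_c, F_e`
convex and `C¹`, is unconditionally energy diminishing. -/
theorem convexSplitting_energy_diminishing
    {n : ℕ} (A : Matrix (Fin n) (Fin n) ℝ) (hA : A.PosSemidef)
    (Fc Fe : EuclideanSpace ℝ (Fin n) → ℝ)
    (hFc : ConvexOn ℝ Set.univ Fc) (hFe : ConvexOn ℝ Set.univ Fe)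
    (fc fe : EuclideanSpace ℝ (Fin n) → EuclideanSpace ℝ (Fin n))
    (hfc : ∀ x, HasGradientAt Fc (fc x) x) (hfe : ∀ x, HasGradientAt Fe (fe x) x)
    (E : EuclideanSpace ℝ (Fin n) → ℝ)
    (hE : ∀ u, E u = (1 / 2) * ⟪Matrix.toEuclideanLin A u, u⟫ + (Fc u - Fe u))
    (Δt : ℝ) (hΔt : 0 < Δt)
    (u u' : EuclideanSpace ℝ (Fin n))
    (hscheme : Δt⁻¹ • (u' - u) + Matrix.toEuclideanLin A u' + fc u' - fe u = 0) :
    E u' ≤ E u := by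
  set L := Matrix.toEuclideanLin A with hLdef
  set v := u' - u with hv
  have hsym : ∀ a b, ⟪L a, b⟫ = ⟪a, L b⟫ := Matrix.isHermitian_iff_isSymmetric.mp hA.1
  -- positive semidefiniteness
  have hpsd : 0 ≤ ⟪L v, v⟫ := by
    have h2 := hA.dotProduct_mulVec_nonneg ((WithLp.equiv 2 _) v)
    have : ⟪L v, v⟫ = dotProduct ((WithLp.equiv 2 _) v) (Matrix.mulVec A ((WithLp.equiv 2 _) v)) := by
      rw [EuclideanSpace.inner_eq_star_dotProduct]
      simp [hLdef, Matrix.toEuclideanLin_apply, dotProduct_comm]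
    rw [this]
    simpa using h2
  -- scheme gives the key identity
  have key : ⟪L u', v⟫ + ⟪fc u', v⟫ - ⟪fe u, v⟫ = -(Δt⁻¹ * ‖v‖ ^ 2) := by
    have heq : L u' + fc u' - fe u = -(Δt⁻¹ • v) := by
      linear_combination (norm := module) hscheme
    have := congrArg (fun w => ⟪w, v⟫) heq
    simp only [inner_sub_left, inner_add_left, inner_neg_left, real_inner_smul_left,
      real_inner_self_eq_norm_sq] at this
    linarith
  -- convexity inequalities
  have hc : Fc u' - Fc u ≤ ⟪fc u', v⟫ := by
    have h := grad_convex_ineq hFc (hfc u') u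
    have : u - u' = -v := by rw [hv]; abel
    rw [this, inner_neg_right] at h
    linarith
  have he : ⟪fe u, v⟫ ≤ Fe u' - Fe u := by
    have h := grad_convex_ineq hFe (hfe u) u'
    rw [← hv] at h
    linarith
  -- quadratic identity
  have quad : ⟪L u', u'⟫ - ⟪L u, u⟫ = 2 * ⟪L u', v⟫ - ⟪L v, v⟫ := by
    have hLv : L v = L u' - L u := by rw [hv, map_sub]
    rw [hLv, hv]
    simp only [inner_sub_left, inner_sub_right]
    have h1 : ⟪L u, u'⟫ = ⟪L u', u⟫ := by
      rw [hsym u u', real_inner_comm]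
    linarith
  have hnn : 0 ≤ Δt⁻¹ * ‖v‖ ^ 2 := by positivity
  rw [hE u, hE u']
  nlinarith [hc, he, key, quad, hpsd, hnn]
end
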